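/- Let R be a commutative integral domain of finite character and let M be a finitely generated torsion-free R-module. Then M_𝔪 is a free R_𝔪-module for all but finitely many maximal ideals 𝔪 of R. -/

import Mathlib

universe u

/-- For a finitely generated module `M` over a domain `R`, there is a nonzero `r : R` and a
free submodule `F ≤ M` with `r • M ⊆ F`. -/
theorem stmt9_aux (R : Type u) [CommRing R] [IsDomain R]
    (M : Type u) [AddCommGroup M] [Module R M] [Module.Finite R M] :
    ∃ r : R, r ≠ 0 ∧ ∃ F : Submodule R M, Module.Free R F ∧ ∀ m : M, r • m ∈ F := by
  classical
  obtain ⟨n, v, hv⟩ := Module.Finite.exists_fin (R := R) (M := M)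
  obtain ⟨I, hI, hmax⟩ := exists_maximal_linearIndepOn R v
  set F := Submodule.span R (Set.range fun i : I => v i) with hF
  have hFfree : Module.Free R F := Module.Free.of_basis (Module.Basis.span hI)
  have key : ∀ i : Fin n, ∃ a : R, a ≠ 0 ∧ a • v i ∈ F := by
    intro i
    by_cases h : i ∈ I
    · refine ⟨1, one_ne_zero, ?_⟩
      rw [one_smul]
      exact Submodule.subset_span ⟨⟨i, h⟩, rfl⟩
    · obtain ⟨a, ha, haF⟩ := hmax i h
      exact ⟨a, ha, by rwa [hF, ← Set.image_eq_range]⟩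
  choose a ha haF using key
  refine ⟨∏ i, a i, Finset.prod_ne_zero_iff.mpr fun i _ => ha i, F, hFfree, ?_⟩
  have hle : Submodule.span R (Set.range v) ≤
      F.comap (LinearMap.lsmul R M (∏ i, a i)) := by
    rw [Submodule.span_le]
    rintro _ ⟨i, rfl⟩
    simp only [Set.mem_setOf_eq, SetLike.mem_coe, Submodule.mem_comap, LinearMap.lsmul_apply]
    rw [← Finset.prod_erase_mul _ _ (Finset.mem_univ i), mul_smul]
    exact F.smul_mem _ (haF i)
  intro m
  have hm : m ∈ Submodule.span R (Set.range v) := hv ▸ Submodule.mem_top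
  simpa using hle hm

/-- Let `R` be a commutative domain of finite character and `M` a finitely
generated torsion-free `R`-module.  Then `M_𝔪` is a free `R_𝔪`-module for all but finitely
many maximal ideals `𝔪` of `R`. -/
theorem stmt9 (R : Type u) [CommRing R] [IsDomain R]
    (hfc : ∀ r : R, r ≠ 0 → {𝔪 : MaximalSpectrum R | r ∈ 𝔪.asIdeal}.Finite)
    (M : Type u) [AddCommGroup M] [Module R M] [Module.Finite R M] [NoZeroSMulDivisors R M] :
    {𝔪 : MaximalSpectrum R | ¬ Module.Free (Localization.AtPrime 𝔪.asIdeal)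
      (LocalizedModule 𝔪.asIdeal.primeCompl M)}.Finite := by
  obtain ⟨r, hr, F, hFfree, hrF⟩ := stmt9_aux R M
  refine (hfc r hr).subset ?_
  intro 𝔪 h𝔪
  by_contra hrm
  apply h𝔪
  have hrc : r ∈ 𝔪.asIdeal.primeCompl := hrm
  letI : Module.Free R F := hFfree
  let f : F →ₗ[R] LocalizedModule 𝔪.asIdeal.primeCompl M :=
    (LocalizedModule.mkLinearMap 𝔪.asIdeal.primeCompl M).comp F.subtype
  haveI : IsLocalizedModule 𝔪.asIdeal.primeCompl f := by
    constructor
    · exact fun s =>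
        IsLocalizedModule.map_units (LocalizedModule.mkLinearMap 𝔪.asIdeal.primeCompl M) s
    · intro y
      induction y using LocalizedModule.induction_on with
      | _ m s =>
        refine ⟨⟨⟨r • m, hrF m⟩, s * ⟨r, hrc⟩⟩, ?_⟩
        show (s * (⟨r, hrc⟩ : 𝔪.asIdeal.primeCompl)) • LocalizedModule.mk m s =
          LocalizedModule.mk (r • m) 1
        rw [Submonoid.smul_def, LocalizedModule.smul'_mk]
        have : ((s * (⟨r, hrc⟩ : 𝔪.asIdeal.primeCompl) : 𝔪.asIdeal.primeCompl) : R) • m =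
            (s : R) • (r • m) := by
          push_cast
          rw [mul_smul]
        rw [this, ← Submonoid.smul_def, LocalizedModule.mk_cancel]
    · intro x y h
      have h' : LocalizedModule.mk (x : M) (1 : 𝔪.asIdeal.primeCompl) =
          LocalizedModule.mk (y : M) 1 := h
      rw [LocalizedModule.mk_eq] at h'
      obtain ⟨u, hu⟩ := h'
      refine ⟨u, Subtype.ext ?_⟩
      simpa using hu
  exact Module.free_of_isLocalizedModule 𝔪.asIdeal.primeCompl f
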